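/- For all real ξ₁ ≠ ξ₂ and all real η₁, η₂, the transitional sine kernel converges in the Hermitian limit: lim_{σ̂ → 0⁺} π σ̂ · K_{σ̂}^S(π ξ₁ + i σ̂ η₁, π ξ₂ + i σ̂ η₂) = (e^{−(η₁² + η₂²)/2}/√π) · sin(π(ξ₁ − ξ₂))/(π(ξ₁ − ξ₂)). -/

import Mathlib

open MeasureTheory Complex Real Filter

/-- The transitional sine kernel `K_σ̂^S(ζ₁, ζ₂)`. -/
noncomputable def Ksine (σ : ℝ) (ζ₁ ζ₂ : ℂ) : ℂ :=
  ((Real.exp (-(ζ₁.im ^ 2 + ζ₂.im ^ 2) / (2 * σ ^ 2)) / (σ * π ^ ((3 : ℝ) / 2)) : ℝ) : ℂ) *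
    ∫ t in (0 : ℝ)..1, ((Real.exp (-t ^ 2 * σ ^ 2) : ℝ) : ℂ) * Complex.cos ((t : ℂ) * (ζ₁ - ζ₂))

theorem sine_kernel_hermitian_limit (ξ₁ ξ₂ η₁ η₂ : ℝ) (hξ : ξ₁ ≠ ξ₂) :
    Tendsto (fun σ : ℝ =>
        ((π * σ : ℝ) : ℂ) *
          Ksine σ ((π * ξ₁ : ℝ) + Complex.I * ((σ * η₁ : ℝ) : ℂ))
            ((π * ξ₂ : ℝ) + Complex.I * ((σ * η₂ : ℝ) : ℂ)))
      (nhdsWithin 0 (Set.Ioi 0))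
      (nhds (((Real.exp (-(η₁ ^ 2 + η₂ ^ 2) / 2) / Real.sqrt π *
        (Real.sin (π * (ξ₁ - ξ₂)) / (π * (ξ₁ - ξ₂))) : ℝ)) : ℂ)) := by
  have hΔ : π * (ξ₁ - ξ₂) ≠ 0 := mul_ne_zero pi_ne_zero (sub_ne_zero.2 hξ)
  set C : ℝ := Real.exp (-(η₁ ^ 2 + η₂ ^ 2) / 2) / Real.sqrt π with hC
  set g : ℝ → ℂ := fun σ =>
    (C : ℂ) * ∫ t in (0:ℝ)..1, ((Real.exp (-t ^ 2 * σ ^ 2) : ℝ) : ℂ) *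
      Complex.cos ((t : ℂ) * (((π * (ξ₁ - ξ₂) : ℝ) : ℂ) + Complex.I * ((σ * (η₁ - η₂) : ℝ) : ℂ)))
    with hg
  -- g is continuous
  have hcont : Continuous g := by
    apply Continuous.mul continuous_const
    apply intervalIntegral.continuous_parametric_intervalIntegral_of_continuous'
    apply Continuous.mul
    · exact Complex.continuous_ofReal.comp (by fun_prop)
    · apply Complex.continuous_cos.comp
      apply Continuous.mul (Complex.continuous_ofReal.comp continuous_snd)
      fun_prop
  -- value of g at 0
  have hg0 : g 0 = ((C * (Real.sin (π * (ξ₁ - ξ₂)) / (π * (ξ₁ - ξ₂))) : ℝ) : ℂ) := by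
    have h1 : ∀ t : ℝ, ((Real.exp (-t ^ 2 * (0:ℝ) ^ 2) : ℝ) : ℂ) *
        Complex.cos ((t : ℂ) * (((π * (ξ₁ - ξ₂) : ℝ) : ℂ) +
          Complex.I * (((0:ℝ) * (η₁ - η₂) : ℝ) : ℂ)))
        = ((Real.cos (t * (π * (ξ₁ - ξ₂))) : ℝ) : ℂ) := by
      intro t
      have h2 : (t : ℂ) * (((π * (ξ₁ - ξ₂) : ℝ) : ℂ) +
          Complex.I * (((0:ℝ) * (η₁ - η₂) : ℝ) : ℂ)) = ((t * (π * (ξ₁ - ξ₂)) : ℝ) : ℂ) := by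
        push_cast; ring
      rw [h2, ← Complex.ofReal_cos]
      norm_num
    show (C : ℂ) * _ = _
    rw [intervalIntegral.integral_congr fun t _ => h1 t, intervalIntegral.integral_ofReal,
      intervalIntegral.integral_comp_mul_right Real.cos hΔ]
    simp [integral_cos, smul_eq_mul, div_eq_inv_mul]
  -- the function agrees with g on Ioi 0
  have heq : ∀ σ : ℝ, σ ∈ Set.Ioi (0:ℝ) →
      ((π * σ : ℝ) : ℂ) *
          Ksine σ ((π * ξ₁ : ℝ) + Complex.I * ((σ * η₁ : ℝ) : ℂ))
            ((π * ξ₂ : ℝ) + Complex.I * ((σ * η₂ : ℝ) : ℂ)) = g σ := by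
    intro σ hσ
    have hσ0 : σ ≠ 0 := ne_of_gt hσ
    rw [Ksine, hg]
    have him1 : ((π * ξ₁ : ℝ) + Complex.I * ((σ * η₁ : ℝ) : ℂ)).im = σ * η₁ := by simp
    have him2 : ((π * ξ₂ : ℝ) + Complex.I * ((σ * η₂ : ℝ) : ℂ)).im = σ * η₂ := by simp
    rw [him1, him2]
    have hsub : ((π * ξ₁ : ℝ) + Complex.I * ((σ * η₁ : ℝ) : ℂ)) -
        ((π * ξ₂ : ℝ) + Complex.I * ((σ * η₂ : ℝ) : ℂ))
        = ((π * (ξ₁ - ξ₂) : ℝ) : ℂ) + Complex.I * ((σ * (η₁ - η₂) : ℝ) : ℂ) := by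
      push_cast; ring
    rw [hsub]
    have hexp : Real.exp (-((σ * η₁) ^ 2 + (σ * η₂) ^ 2) / (2 * σ ^ 2))
        = Real.exp (-(η₁ ^ 2 + η₂ ^ 2) / 2) := by
      congr 1
      field_simp
    rw [hexp]
    have hpow : π ^ ((3:ℝ)/2) = π * Real.sqrt π := by
      rw [Real.sqrt_eq_rpow, ← Real.rpow_one_add' pi_pos.le (by norm_num)]
      norm_num
    have hsπ : Real.sqrt π ≠ 0 := ne_of_gt (Real.sqrt_pos.2 pi_pos)
    have hconst : π * σ * (Real.exp (-(η₁ ^ 2 + η₂ ^ 2) / 2) / (σ * (π * Real.sqrt π))) = C := by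
      rw [hC]
      field_simp
    rw [hpow, ← mul_assoc, ← Complex.ofReal_mul, hconst]
  refine Tendsto.congr' (f₁ := g) ?_ ?_
  · exact eventuallyEq_nhdsWithin_of_eqOn fun σ hσ => (heq σ hσ).symm
  · rw [← hg0]
    exact (hcont.tendsto 0).mono_left nhdsWithin_le_nhds
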